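/- For the Mills ratio R(t) = exp(t²/2)·∫_t^∞ exp(−x²/2) dx of the standard normal distribution, the derivative of 1/R(t) is strictly less than 1 for all real t. -/

import Mathlib

open MeasureTheory

noncomputable def millsRatio (t : ℝ) : ℝ :=
  Real.exp (t ^ 2 / 2) * ∫ u in Set.Ioi t, Real.exp (-u ^ 2 / 2)

namespace MillsAux

open Set Filter Real

noncomputable def f (x : ℝ) : ℝ := Real.exp (-x ^ 2 / 2)

noncomputable def G (t : ℝ) : ℝ := ∫ u in Set.Ioi t, f u

lemma f_cont : Continuous f := by
  unfold f; fun_prop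

lemma f_pos (x : ℝ) : 0 < f x := Real.exp_pos _

lemma f_integrable : Integrable f := by
  have h := integrable_exp_neg_mul_sq (b := (1/2 : ℝ)) (by norm_num)
  convert h using 2 with x
  unfold f; ring_nf

lemma G_pos (t : ℝ) : 0 < G t := by
  unfold G
  rw [setIntegral_pos_iff_support_of_nonneg_ae
      (Filter.Eventually.of_forall fun x => (f_pos x).le)
      (f_integrable.integrableOn)]
  have : Function.support f = Set.univ := by
    ext x; simp [Function.support, (f_pos x).ne']
  rw [this, Set.univ_inter]
  simp [Real.volume_Ioi]

lemma G_eq (s : ℝ) : G s = G 0 - ∫ x in (0:ℝ)..s, f x := by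
  rcases le_total 0 s with h | h
  · have hsplit : G 0 = (∫ x in Ioc 0 s, f x) + G s := by
      unfold G
      rw [← setIntegral_union (Set.Ioc_disjoint_Ioi le_rfl) measurableSet_Ioi
        f_integrable.integrableOn f_integrable.integrableOn,
        Set.Ioc_union_Ioi_eq_Ioi h]
    rw [intervalIntegral.integral_of_le h]
    linarith
  · have hsplit : G s = (∫ x in Ioc s 0, f x) + G 0 := by
      unfold G
      rw [← setIntegral_union (Set.Ioc_disjoint_Ioi le_rfl) measurableSet_Ioi
        f_integrable.integrableOn f_integrable.integrableOn,
        Set.Ioc_union_Ioi_eq_Ioi h]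
    rw [intervalIntegral.integral_of_ge h]
    rw [MeasureTheory.integral_Ioc_eq_integral_Ioo] at hsplit
    rw [MeasureTheory.integral_Ioc_eq_integral_Ioo]
    linarith

lemma hasDerivAt_G (t : ℝ) : HasDerivAt G (-(f t)) t := by
  have h1 : HasDerivAt (fun s => ∫ x in (0:ℝ)..s, f x) (f t) t :=
    (f_cont.integral_hasStrictDerivAt 0 t).hasDerivAt
  have h2 : HasDerivAt (fun s => G 0 - ∫ x in (0:ℝ)..s, f x) (0 - f t) t :=
    (hasDerivAt_const t (G 0)).sub h1
  have := h2.congr_of_eventuallyEq (Filter.Eventually.of_forall fun s => (G_eq s))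
  simpa using this

lemma hasDerivAt_f (t : ℝ) : HasDerivAt f (-t * f t) t := by
  have h1 : HasDerivAt (fun x : ℝ => -x ^ 2 / 2) (-t) t := by
    have h2 := ((hasDerivAt_pow 2 t).neg).div_const 2
    refine h2.congr_deriv ?_
    norm_num
    ring
  have := h1.exp
  unfold f; simpa [mul_comm] using this

lemma tendsto_sq : Tendsto (fun t : ℝ => t ^ 2 / 2) atTop atTop := by
  apply Filter.Tendsto.atTop_div_const (by norm_num)
  exact tendsto_pow_atTop (by norm_num)

lemma tendsto_f : Tendsto f atTop (nhds 0) := by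
  have := Real.tendsto_exp_neg_atTop_nhds_zero.comp tendsto_sq
  refine this.congr fun t => ?_
  simp [f, Function.comp, neg_div]

lemma tendsto_pow_f (n : ℕ) : Tendsto (fun t : ℝ => t ^ (2 * n) * f t) atTop (nhds 0) := by
  have h := (Real.tendsto_pow_mul_exp_neg_atTop_nhds_zero n).comp tendsto_sq
  have h2 : Tendsto (fun t : ℝ => 2 ^ n * ((t ^ 2 / 2) ^ n * Real.exp (-(t ^ 2 / 2))))
      atTop (nhds (2 ^ n * 0)) := h.const_mul _
  simp only [mul_zero] at h2
  refine h2.congr fun t => ?_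
  simp only [f]
  rw [div_pow, neg_div, pow_mul]
  field_simp

lemma tendsto_mul_f : Tendsto (fun t : ℝ => t * f t) atTop (nhds 0) := by
  refine tendsto_of_tendsto_of_tendsto_of_le_of_le' tendsto_const_nhds
    (by simpa using tendsto_pow_f 1) ?_ ?_
  · filter_upwards [eventually_ge_atTop (0:ℝ)] with s hs
    have := (f_pos s).le
    positivity
  · filter_upwards [eventually_ge_atTop (1:ℝ)] with s hs
    have h0 : (0:ℝ) ≤ s * (s - 1) :=
      mul_nonneg (by linarith) (by linarith)
    nlinarith [f_pos s]

lemma G_le_exp : ∀ᶠ t in atTop, G t ≤ Real.exp (-t) := by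
  filter_upwards [eventually_ge_atTop (2:ℝ)] with s hs
  have h1 : ∫ u in Set.Ioi s, Real.exp (-u) = Real.exp (-s) := integral_exp_neg_Ioi s
  rw [G, ← h1]
  refine setIntegral_mono_on f_integrable.integrableOn ?_ measurableSet_Ioi ?_
  · have := exp_neg_integrableOn_Ioi s (one_pos)
    simpa using this
  · intro x hx
    simp only [Set.mem_Ioi] at hx
    unfold f
    apply Real.exp_le_exp.2
    nlinarith

lemma tendsto_pow_G (n : ℕ) : Tendsto (fun t : ℝ => t ^ n * G t) atTop (nhds 0) := by
  refine tendsto_of_tendsto_of_tendsto_of_le_of_le' tendsto_const_nhds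
    (Real.tendsto_pow_mul_exp_neg_atTop_nhds_zero n) ?_ ?_
  · filter_upwards [eventually_ge_atTop (0:ℝ)] with s hs
    have := (G_pos s).le
    positivity
  · filter_upwards [G_le_exp, eventually_ge_atTop (0:ℝ)] with s hG hs
    have : (0:ℝ) ≤ s ^ n := by positivity
    exact mul_le_mul_of_nonneg_left hG this

lemma tendsto_G : Tendsto G atTop (nhds 0) := by
  have := tendsto_pow_G 0
  simpa using this

/-- U = f - t*G : positive -/
noncomputable def U (t : ℝ) : ℝ := f t - t * G t

lemma hasDerivAt_U (t : ℝ) : HasDerivAt U (-(G t)) t := by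
  have h := (hasDerivAt_f t).sub ((hasDerivAt_id t).mul (hasDerivAt_G t))
  simp only [id_eq] at h
  have e : -t * f t - (1 * G t + t * -f t) = -(G t) := by ring
  rw [e] at h
  exact h

lemma tendsto_U : Tendsto U atTop (nhds 0) := by
  have h := tendsto_f.sub (tendsto_pow_G 1)
  have e : (0:ℝ) - 0 = 0 := by ring
  rw [e] at h
  refine h.congr fun s => ?_
  simp only [U, pow_one]

lemma pos_of_strictAnti_tendsto {F : ℝ → ℝ} (hF : StrictAnti F)
    (h0 : Tendsto F atTop (nhds 0)) (t : ℝ) : 0 < F t := by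
  have h1 : 0 ≤ F (t + 1) := by
    refine le_of_tendsto h0 ?_
    filter_upwards [eventually_ge_atTop (t + 1)] with s hs
    exact hF.antitone hs
  have h2 : F (t + 1) < F t := hF (by linarith)
  linarith

lemma U_pos (t : ℝ) : 0 < U t := by
  refine pos_of_strictAnti_tendsto ?_ tendsto_U t
  apply strictAnti_of_deriv_neg
  intro x
  rw [(hasDerivAt_U x).deriv]
  simpa using G_pos x

/-- W = (1+t^2) G - t f : positive -/
noncomputable def W (t : ℝ) : ℝ := (1 + t ^ 2) * G t - t * f t

lemma hasDerivAt_W (t : ℝ) : HasDerivAt W (-(2 * U t)) t := by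
  have hq : HasDerivAt (fun s : ℝ => 1 + s ^ 2) (2 * t) t := by
    have := (hasDerivAt_pow 2 t).const_add 1
    simpa using this
  have h := (hq.mul (hasDerivAt_G t)).sub ((hasDerivAt_id t).mul (hasDerivAt_f t))
  simp only [id_eq] at h
  have e : 2 * t * G t + (1 + t ^ 2) * -f t - (1 * f t + t * (-t * f t)) = -(2 * U t) := by
    simp only [U]; ring
  rw [e] at h
  exact h

lemma tendsto_W : Tendsto W atTop (nhds 0) := by
  have h := (tendsto_G.add (tendsto_pow_G 2)).sub tendsto_mul_f
  have e : (0:ℝ) + 0 - 0 = 0 := by ring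
  rw [e] at h
  refine h.congr fun s => ?_
  simp only [W]; ring

lemma W_pos (t : ℝ) : 0 < W t := by
  refine pos_of_strictAnti_tendsto ?_ tendsto_W t
  apply strictAnti_of_deriv_neg
  intro x
  rw [(hasDerivAt_W x).deriv]
  simpa using U_pos x

/-- V = G^2 - f^2 + t f G : positive -/
noncomputable def V (t : ℝ) : ℝ := G t ^ 2 - f t ^ 2 + t * f t * G t

lemma hasDerivAt_V (t : ℝ) : HasDerivAt V (-(f t * W t)) t := by
  have h1 : HasDerivAt (fun s => G s ^ 2) (2 * G t ^ 1 * -f t) t :=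
    (hasDerivAt_G t).pow 2
  have h2 : HasDerivAt (fun s => f s ^ 2) (2 * f t ^ 1 * (-t * f t)) t :=
    (hasDerivAt_f t).pow 2
  have h3 : HasDerivAt (fun s : ℝ => s * f s) (1 * f t + t * (-t * f t)) t := by
    have := (hasDerivAt_id' t).mul (hasDerivAt_f t)
    exact this.congr_deriv (by ring)
  have h := (h1.sub h2).add (h3.mul (hasDerivAt_G t))
  have e : 2 * G t ^ 1 * -f t - 2 * f t ^ 1 * (-t * f t) +
      ((1 * f t + t * (-t * f t)) * G t + t * f t * -f t) = -(f t * W t) := by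
    simp only [W]; ring
  rw [e] at h
  exact h

lemma tendsto_V : Tendsto V atTop (nhds 0) := by
  have h := ((tendsto_G.mul tendsto_G).sub (tendsto_f.mul tendsto_f)).add
    (tendsto_mul_f.mul tendsto_G)
  have e : (0:ℝ) * 0 - 0 * 0 + 0 * 0 = 0 := by ring
  rw [e] at h
  refine h.congr fun s => ?_
  simp only [V]; ring

lemma V_pos (t : ℝ) : 0 < V t := by
  refine pos_of_strictAnti_tendsto ?_ tendsto_V t
  apply strictAnti_of_deriv_neg
  intro x
  rw [(hasDerivAt_V x).deriv]
  have := mul_pos (f_pos x) (W_pos x)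
  linarith

lemma millsRatio_eq (t : ℝ) : millsRatio t = Real.exp (t ^ 2 / 2) * G t := rfl

lemma millsRatio_pos (t : ℝ) : 0 < millsRatio t :=
  mul_pos (Real.exp_pos _) (G_pos t)

lemma hasDerivAt_millsRatio (t : ℝ) :
    HasDerivAt millsRatio (t * millsRatio t - 1) t := by
  have h1 : HasDerivAt (fun s : ℝ => s ^ 2 / 2) t t := by
    have h2 := (hasDerivAt_pow 2 t).div_const 2
    refine h2.congr_deriv ?_
    norm_num
  have h2 : HasDerivAt (fun s : ℝ => Real.exp (s ^ 2 / 2))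
      (Real.exp (t ^ 2 / 2) * t) t := by
    have := h1.exp
    simpa [mul_comm] using this
  have h := h2.mul (hasDerivAt_G t)
  have hef : Real.exp (t ^ 2 / 2) * f t = 1 := by
    rw [f, ← Real.exp_add]
    have e0 : t ^ 2 / 2 + -t ^ 2 / 2 = 0 := by ring
    rw [e0, Real.exp_zero]
  have e : Real.exp (t ^ 2 / 2) * t * G t + Real.exp (t ^ 2 / 2) * -f t
      = t * millsRatio t - 1 := by
    rw [millsRatio_eq]
    nlinarith [hef]
  rw [e] at h
  exact h

end MillsAux

theorem stmt_19 (t : ℝ) :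
    deriv (fun s : ℝ => 1 / millsRatio s) t < 1 := by
  have hR := MillsAux.hasDerivAt_millsRatio t
  have hRpos := MillsAux.millsRatio_pos t
  have hne : millsRatio t ≠ 0 := hRpos.ne'
  have hinv : HasDerivAt (fun s : ℝ => 1 / millsRatio s)
      ((0 * millsRatio t - 1 * (t * millsRatio t - 1)) / millsRatio t ^ 2) t :=
    (hasDerivAt_const t (1:ℝ)).div hR hne
  rw [hinv.deriv]
  rw [div_lt_one (by positivity)]
  have hV := MillsAux.V_pos t
  have hef : Real.exp (t ^ 2 / 2) * MillsAux.f t = 1 := by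
    rw [MillsAux.f, ← Real.exp_add]
    have e0 : t ^ 2 / 2 + -t ^ 2 / 2 = 0 := by ring
    rw [e0, Real.exp_zero]
  have hRdef : millsRatio t = Real.exp (t ^ 2 / 2) * MillsAux.G t := rfl
  have he : (0:ℝ) < Real.exp (t ^ 2 / 2) := Real.exp_pos _
  have key : 0 < millsRatio t ^ 2 + t * millsRatio t - 1 := by
    have h2 : 0 < Real.exp (t ^ 2 / 2) ^ 2 * MillsAux.V t := by positivity
    simp only [MillsAux.V] at h2
    rw [hRdef]
    nlinarith [h2, hef]
  nlinarith [key]
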